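/- Define the IFEBM update map Φ as follows. Given symmetric positive definite real 3×3 matrices C and Cᵢ with det Cᵢ = 1 and given λ ≥ 0, ε ≥ 0, set C̄ := (det C)^{-1/3}·C, let A := C̄^{-1/2}·(Cᵢ + λ·C̄)·C̄^{-1/2} (using the positive definite square root C̄^{1/2} of C̄), φ₀ := (det A)^{1/3}, φ := φ₀ − (tr A/(3φ₀))·ε, X := 2·A·(sqrt(φ²·I + 4ε·A) + φ·I)⁻¹, and Φ(C, Cᵢ) := (det(C^{1/2}·X·C^{1/2}))^{-1/3}·C^{1/2}·X·C^{1/2}. Then for every invertible real 3×3 matrix F₀ with det F₀ = 1, Φ(F₀⁻ᵀ·C·F₀⁻¹, F₀⁻ᵀ·Cᵢ·F₀⁻¹) = F₀⁻ᵀ·Φ(C, Cᵢ)·F₀⁻¹. That is, the iteration-free Euler backward method exactly preserves w-invariance under volume-preserving changes of the reference configuration. -/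

import Mathlib

open Matrix

abbrev Mat := Matrix (Fin 3) (Fin 3) ℝ

/-- The unimodular part of a matrix. -/
noncomputable def unimod (M : Mat) : Mat := (M.det ^ (-(1 : ℝ) / 3)) • M

/-- The unique positive semidefinite square root of a positive semidefinite matrix
(junk value `0` on matrices that are not positive semidefinite). -/
noncomputable def msqrt (M : Mat) : Mat := by
  classical exact if h : M.PosSemidef then
    h.1.eigenvectorUnitary.1 * diagonal ((↑) ∘ (√·) ∘ h.1.eigenvalues) *
      (star h.1.eigenvectorUnitary : Mat) else 0

/-- The IFEBM update map `Φ`: given the step parameters `λ = Δt·c₁₀/η`, `ε = Δt·c₀₁/η`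
and the inputs `C`, `Cᵢ`, it produces the updated internal variable. -/
noncomputable def ifebmUpdate (lam eps : ℝ) (C Ci : Mat) : Mat :=
  let Cb : Mat := unimod C
  let A : Mat := (msqrt Cb)⁻¹ * (Ci + lam • Cb) * (msqrt Cb)⁻¹
  let φ0 : ℝ := A.det ^ ((1 : ℝ) / 3)
  let φ : ℝ := φ0 - A.trace / (3 * φ0) * eps
  let X : Mat := (2 : ℝ) • A * (msqrt (φ ^ 2 • (1 : Mat) + (4 * eps) • A) + φ • (1 : Mat))⁻¹
  unimod (msqrt C * X * msqrt C)

lemma cancel_left {A B : Mat} (h : A * B = 1) (x : Mat) : A * (B * x) = x := by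
  rw [← Matrix.mul_assoc, h, Matrix.one_mul]

lemma posSemidef_conj {M : Mat} (hM : M.PosSemidef) (P : Mat) : (Pᵀ * M * P).PosSemidef := by
  simpa [conjTranspose_eq_transpose_of_trivial] using hM.conjTranspose_mul_mul_same P

lemma posDef_conj {M : Mat} (hM : M.PosDef) {P : Mat} (hP : IsUnit P) :
    (Pᵀ * M * P).PosDef := by
  have hinj : Function.Injective P.mulVec := fun x y hxy => by
    have h2 := congrArg (fun v => P⁻¹ *ᵥ v) hxy
    simpa [Matrix.mulVec_mulVec,
      Matrix.nonsing_inv_mul _ ((Matrix.isUnit_iff_isUnit_det P).mp hP)] using h2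
  simpa [conjTranspose_eq_transpose_of_trivial] using hM.conjTranspose_mul_mul_same hinj

lemma posSemidef_smul {M : Mat} (hM : M.PosSemidef) {c : ℝ} (hc : 0 ≤ c) :
    (c • M).PosSemidef := by
  exact hM.smul hc

lemma posDef_smul {M : Mat} (hM : M.PosDef) {c : ℝ} (hc : 0 < c) :
    (c • M).PosDef := by
  exact hM.smul hc

open scoped MatrixOrder in
lemma msqrt_eq {M : Mat} (h : M.PosSemidef) : msqrt M = CFC.sqrt M := by
  rw [CFC.sqrt_eq_cfc, cfc_nnreal_eq_real _ M h.nonneg, h.1.cfc_eq]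
  simp only [msqrt, dif_pos h, IsHermitian.cfc, Unitary.conjStarAlgAut_apply]
  congr 3
  funext i
  simp [h.eigenvalues_nonneg i]

open scoped MatrixOrder in
lemma eq_sqrt_of_sq_eq' {S M : Mat} (hS : S.PosSemidef) (_hM : M.PosSemidef) (h : S ^ 2 = M) :
    S = CFC.sqrt M :=
  (CFC.sqrt_unique (by rw [← pow_two]; exact h) hS.nonneg).symm

open scoped MatrixOrder in
lemma msqrt_posSemidef {M : Mat} (h : M.PosSemidef) : (msqrt M).PosSemidef := by
  rw [msqrt_eq h]; exact (CFC.sqrt_nonneg M).posSemidef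

open scoped MatrixOrder in
lemma msqrt_mul_self {M : Mat} (h : M.PosSemidef) : msqrt M * msqrt M = M := by
  rw [msqrt_eq h]; exact CFC.sqrt_mul_sqrt_self M h.nonneg

lemma msqrt_transpose {M : Mat} (h : M.PosSemidef) : (msqrt M)ᵀ = msqrt M := by
  have h2 := (msqrt_posSemidef h).1
  rwa [IsHermitian, conjTranspose_eq_transpose_of_trivial] at h2

lemma msqrt_isUnit {M : Mat} (h : M.PosDef) : IsUnit (msqrt M) := by
  rw [Matrix.isUnit_iff_isUnit_det]
  have h2 : (msqrt M).det * (msqrt M).det = M.det := by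
    rw [← Matrix.det_mul, msqrt_mul_self h.posSemidef]
  refine isUnit_iff_ne_zero.mpr fun h0 => ?_
  rw [h0, mul_zero] at h2
  exact (ne_of_gt h.det_pos) h2.symm

lemma msqrt_mul_inv {M : Mat} (h : M.PosDef) : msqrt M * (msqrt M)⁻¹ = 1 :=
  Matrix.mul_nonsing_inv _ ((Matrix.isUnit_iff_isUnit_det _).mp (msqrt_isUnit h))

lemma msqrt_inv_mul {M : Mat} (h : M.PosDef) : (msqrt M)⁻¹ * msqrt M = 1 :=
  Matrix.nonsing_inv_mul _ ((Matrix.isUnit_iff_isUnit_det _).mp (msqrt_isUnit h))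

lemma msqrt_inv_transpose {M : Mat} (h : M.PosSemidef) : ((msqrt M)⁻¹)ᵀ = (msqrt M)⁻¹ := by
  rw [Matrix.transpose_nonsing_inv, msqrt_transpose h]

lemma msqrt_smul {M : Mat} (h : M.PosSemidef) {c : ℝ} (hc : 0 ≤ c) :
    msqrt (c • M) = Real.sqrt c • msqrt M := by
  have hcM := posSemidef_smul h hc
  rw [msqrt_eq hcM]
  refine (eq_sqrt_of_sq_eq' (posSemidef_smul (msqrt_posSemidef h) (Real.sqrt_nonneg c)) hcM ?_).symm
  rw [pow_two, Matrix.smul_mul, Matrix.mul_smul, smul_smul, Real.mul_self_sqrt hc,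
    msqrt_mul_self h]

lemma msqrt_conj {M Q : Mat} (hM : M.PosSemidef) (hQ : Q * Qᵀ = 1) :
    msqrt (Q * M * Qᵀ) = Q * msqrt M * Qᵀ := by
  have hQ' : Qᵀ * Q = 1 := mul_eq_one_comm.mp hQ
  have hconj : (Q * M * Qᵀ).PosSemidef := by
    simpa using posSemidef_conj hM Qᵀ
  rw [msqrt_eq hconj]
  have hS : (Q * msqrt M * Qᵀ).PosSemidef := by
    simpa using posSemidef_conj (msqrt_posSemidef hM) Qᵀ
  refine (eq_sqrt_of_sq_eq' hS hconj ?_).symm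
  rw [pow_two]
  simp only [Matrix.mul_assoc, cancel_left hQ']
  rw [← Matrix.mul_assoc (msqrt M) (msqrt M) Qᵀ, msqrt_mul_self hM]

lemma inv_conj_orth (M : Mat) {Q : Mat} (hQ : Q * Qᵀ = 1) :
    (Q * M * Qᵀ)⁻¹ = Q * M⁻¹ * Qᵀ := by
  have hQ' : Qᵀ * Q = 1 := mul_eq_one_comm.mp hQ
  rw [Matrix.mul_inv_rev, Matrix.mul_inv_rev, Matrix.inv_eq_right_inv hQ',
    Matrix.inv_eq_right_inv hQ, Matrix.mul_assoc]

lemma det_conj_orth (M : Mat) {Q : Mat} (hQ : Q * Qᵀ = 1) :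
    (Q * M * Qᵀ).det = M.det := by
  have h1 : Q.det * Qᵀ.det = 1 := by rw [← Matrix.det_mul, hQ, Matrix.det_one]
  rw [Matrix.det_mul, Matrix.det_mul, mul_comm Q.det M.det, mul_assoc, h1, mul_one]

lemma trace_conj_orth (M : Mat) {Q : Mat} (hQ : Q * Qᵀ = 1) :
    (Q * M * Qᵀ).trace = M.trace := by
  rw [Matrix.trace_mul_comm, ← Matrix.mul_assoc, mul_eq_one_comm.mp hQ, Matrix.one_mul]

lemma unimod_conj (M : Mat) {P : Mat} (hdP : P.det = 1) :
    unimod (Pᵀ * M * P) = Pᵀ * unimod M * P := by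
  have hdet : (Pᵀ * M * P).det = M.det := by
    rw [Matrix.det_mul, Matrix.det_mul, Matrix.det_transpose, hdP, one_mul, mul_one]
  rw [unimod, unimod, hdet, Matrix.mul_smul, Matrix.smul_mul]

lemma X_conj {A Q : Mat} (hA : A.PosSemidef) (hQ : Q * Qᵀ = 1) {eps : ℝ} (heps : 0 ≤ eps)
    (φ : ℝ) :
    (2:ℝ) • (Q*A*Qᵀ) * (msqrt (φ^2 • (1:Mat) + (4*eps) • (Q*A*Qᵀ)) + φ • (1:Mat))⁻¹
    = Q * ((2:ℝ) • A * (msqrt (φ^2 • (1:Mat) + (4*eps) • A) + φ • (1:Mat))⁻¹) * Qᵀ := by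
  have hQ' : Qᵀ * Q = 1 := mul_eq_one_comm.mp hQ
  have hM : (φ^2 • (1:Mat) + (4*eps) • A).PosSemidef :=
    (posSemidef_smul Matrix.PosSemidef.one (sq_nonneg φ)).add
      (posSemidef_smul hA (by positivity))
  have h1 : φ^2 • (1:Mat) + (4*eps) • (Q*A*Qᵀ) = Q * (φ^2 • (1:Mat) + (4*eps) • A) * Qᵀ := by
    rw [Matrix.mul_add, Matrix.add_mul, Matrix.mul_smul, Matrix.smul_mul,
      Matrix.mul_smul, Matrix.smul_mul, Matrix.mul_one, hQ]
  have h2 : φ • (1:Mat) = Q * (φ • (1:Mat)) * Qᵀ := by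
    rw [Matrix.mul_smul, Matrix.smul_mul, Matrix.mul_one, hQ]
  rw [h1, msqrt_conj hM hQ, h2, ← Matrix.add_mul, ← Matrix.mul_add, ← h2,
    inv_conj_orth _ hQ]
  simp only [Matrix.smul_mul, Matrix.mul_smul, Matrix.mul_assoc, cancel_left hQ']

theorem key (lam eps : ℝ) (hlam : 0 ≤ lam) (heps : 0 ≤ eps) (C Ci : Mat)
    (hC : C.PosDef) (hCi : Ci.PosDef) (P : Mat) (hP : IsUnit P) (hdP : P.det = 1) :
    ifebmUpdate lam eps (Pᵀ * C * P) (Pᵀ * Ci * P) = Pᵀ * ifebmUpdate lam eps C Ci * P := by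
  set C' : Mat := Pᵀ * C * P with hC'def
  set Ci' : Mat := Pᵀ * Ci * P with hCi'def
  have hC' : C'.PosDef := posDef_conj hC hP
  have hdetC' : C'.det = C.det := by
    rw [hC'def, Matrix.det_mul, Matrix.det_mul, Matrix.det_transpose, hdP, one_mul, mul_one]
  have hc : (0:ℝ) < C.det ^ (-(1:ℝ)/3) := Real.rpow_pos_of_pos hC.det_pos _
  have hCb : unimod C = (C.det ^ (-(1:ℝ)/3)) • C := rfl
  have hCb' : unimod C' = (C.det ^ (-(1:ℝ)/3)) • C' := by rw [unimod, hdetC']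
  have hCbpd : (unimod C).PosDef := by rw [hCb]; exact posDef_smul hC hc
  have hCbpd' : (unimod C').PosDef := by rw [hCb']; exact posDef_smul hC' hc
  set sC : Mat := msqrt C with hsCdef
  set sC' : Mat := msqrt C' with hsC'def
  set sCb : Mat := msqrt (unimod C) with hsCbdef
  set sCb' : Mat := msqrt (unimod C') with hsCb'def
  set r : ℝ := Real.sqrt (C.det ^ (-(1:ℝ)/3)) with hrdef
  have hr : r ≠ 0 := (Real.sqrt_pos.mpr hc).ne'
  have hsCb : sCb = r • sC := by rw [hsCbdef, hCb, msqrt_smul hC.posSemidef hc.le]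
  have hsCb' : sCb' = r • sC' := by rw [hsCb'def, hCb', msqrt_smul hC'.posSemidef hc.le]
  have hsC'1 : sC' * sC'⁻¹ = 1 := msqrt_mul_inv hC'
  have hsC'2 : sC'⁻¹ * sC' = 1 := msqrt_inv_mul hC'
  have hsCb1 : sCb * sCb⁻¹ = 1 := msqrt_mul_inv hCbpd
  have hsCb2 : sCb⁻¹ * sCb = 1 := msqrt_inv_mul hCbpd
  have hsCsq : sC * sC = C := msqrt_mul_self hC.posSemidef
  have hsC'sq : sC' * sC' = C' := msqrt_mul_self hC'.posSemidef
  set Q : Mat := sC'⁻¹ * Pᵀ * sC with hQdef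
  have hQt : Qᵀ = sC * (P * sC'⁻¹) := by
    rw [hQdef, Matrix.transpose_mul, Matrix.transpose_mul, msqrt_transpose hC.posSemidef,
      Matrix.transpose_transpose, msqrt_inv_transpose hC'.posSemidef]
  have hQQt : Q * Qᵀ = 1 := by
    rw [hQdef, hQt]
    have e1 : ∀ x : Mat, sC * (sC * x) = C * x := fun x => by
      rw [← Matrix.mul_assoc, hsCsq]
    have e2 : ∀ x : Mat, Pᵀ * (C * (P * x)) = C' * x := fun x => by
      rw [hC'def]; simp only [Matrix.mul_assoc]
    have e3 : ∀ x : Mat, C' * x = sC' * (sC' * x) := fun x => by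
      rw [← hsC'sq]; simp only [Matrix.mul_assoc]
    simp only [Matrix.mul_assoc, e1, e2, e3, cancel_left hsC'2, hsC'1]
  have hQtQ : Qᵀ * Q = 1 := mul_eq_one_comm.mp hQQt
  have hsCb'inv : sCb'⁻¹ = r⁻¹ • sC'⁻¹ := by
    rw [hsCb']
    refine Matrix.inv_eq_right_inv ?_
    rw [Matrix.smul_mul, Matrix.mul_smul, smul_smul, hsC'1, mul_inv_cancel₀ hr, one_smul]
  have hQalt : Q = sCb'⁻¹ * Pᵀ * sCb := by
    rw [hsCb'inv, hsCb, Matrix.smul_mul, Matrix.smul_mul, Matrix.mul_smul, smul_smul,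
      inv_mul_cancel₀ hr, one_smul, hQdef]
  have hQtb : Qᵀ = sCb * (P * sCb'⁻¹) := by
    rw [hQalt, Matrix.transpose_mul, Matrix.transpose_mul,
      msqrt_transpose hCbpd.posSemidef, Matrix.transpose_transpose,
      msqrt_inv_transpose hCbpd'.posSemidef]
  have hsum : Ci' + lam • unimod C' = Pᵀ * (Ci + lam • unimod C) * P := by
    have : unimod C' = Pᵀ * unimod C * P := by rw [hC'def]; exact unimod_conj C hdP
    rw [hCi'def, this, Matrix.mul_add, Matrix.add_mul, Matrix.mul_smul, Matrix.smul_mul]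
  have hA' : sCb'⁻¹ * (Ci' + lam • unimod C') * sCb'⁻¹
      = Q * (sCb⁻¹ * (Ci + lam • unimod C) * sCb⁻¹) * Qᵀ := by
    rw [hsum, hQtb, hQalt]
    simp only [Matrix.mul_assoc, cancel_left hsCb1, cancel_left hsCb2]
  have hApsd : (sCb⁻¹ * (Ci + lam • unimod C) * sCb⁻¹).PosSemidef := by
    have hMpsd : (Ci + lam • unimod C).PosSemidef :=
      hCi.posSemidef.add (posSemidef_smul hCbpd.posSemidef hlam)
    have := posSemidef_conj hMpsd sCb⁻¹
    rwa [msqrt_inv_transpose hCbpd.posSemidef] at this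
  have hfin : ∀ X : Mat, sC' * (Q * X * Qᵀ) * sC' = Pᵀ * (sC * X * sC) * P := by
    intro X
    rw [hQdef, hQt]
    simp only [Matrix.mul_assoc, cancel_left hsC'1, hsC'2, Matrix.mul_one]
  simp only [ifebmUpdate]
  rw [hA', det_conj_orth _ hQQt, trace_conj_orth _ hQQt, X_conj hApsd hQQt heps, hfin,
    unimod_conj _ hdP]

/-- The iteration-free Euler backward method exactly preserves the
w-invariance under volume-preserving changes of the reference configuration. -/
theorem ifebm_w_invariance (C Ci : Mat) (hC : C.PosDef) (hCi : Ci.PosDef)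
    (h1 : Ci.det = 1) (lam eps : ℝ) (hlam : 0 ≤ lam) (heps : 0 ≤ eps)
    (F0 : Mat) (hF0 : IsUnit F0) (hdetF0 : F0.det = 1) :
    ifebmUpdate lam eps ((F0⁻¹)ᵀ * C * F0⁻¹) ((F0⁻¹)ᵀ * Ci * F0⁻¹) =
      (F0⁻¹)ᵀ * ifebmUpdate lam eps C Ci * F0⁻¹ := by
  have hd : (F0⁻¹).det = 1 := by
    rw [Matrix.det_nonsing_inv, hdetF0, Ring.inverse_one]
  have hu : IsUnit (F0⁻¹) :=
    (Matrix.isUnit_iff_isUnit_det _).mpr (hd ▸ isUnit_one)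
  exact key lam eps hlam heps C Ci hC hCi F0⁻¹ hu hd
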